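/- Let S be a semidomain. Then the polynomial semidomain S[x] is a GCD-semidomain (every finite nonempty subset of S[x]* has a greatest common divisor) if and only if S is a GCD-domain (in particular S must be an integral domain). -/

import Mathlib

open Polynomial

/-- A witness that the commutative semiring `S` embeds into an integral domain. -/
structure SemidomainWitness (S : Type) [CommSemiring S] : Type 1 where
  R : Type
  [commRing : CommRing R]
  [isDomain : IsDomain R]
  f : S →+* R
  inj : Function.Injective f

/-- A semidomain is a commutative semiring that embeds into an integral domain. -/
def IsSemidomain (S : Type) [CommSemiring S] : Prop :=
  Nonempty (SemidomainWitness S)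


/-- A commutative monoid with zero is a GCD-monoid (on its nonzero elements) if every finite
nonempty set of nonzero elements has a greatest common divisor. -/
def IsGCDS (M : Type) [CommMonoidWithZero M] : Prop :=
  ∀ T : Finset M, T.Nonempty → (∀ t ∈ T, t ≠ 0) →
    ∃ d : M, (∀ t ∈ T, d ∣ t) ∧ ∀ e : M, (∀ t ∈ T, e ∣ t) → e ∣ d



section ContentPort
variable {R : Type} [CommRing R] [IsDomain R] [GCDMonoid R]

noncomputable local instance : NormalizedGCDMonoid (Associates R) :=
  { (inferInstance : NormalizationMonoid (Associates R)),
    (inferInstance : GCDMonoid (Associates R)) with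
    normalize_gcd := fun a b => by simp [normalize_apply]
    normalize_lcm := fun a b => by simp [normalize_apply] }

theorem anor (x : Associates R) : normalize x = x := by simp [normalize_apply]

theorem aeq {a b : Associates R} (h1 : a ∣ b) (h2 : b ∣ a) : a = b :=
  dvd_antisymm_of_normalize_eq (anor a) (anor b) h1 h2

noncomputable def acnt (p : R[X]) : Associates R :=
  (Finset.range (p.natDegree + 1)).gcd fun n => Associates.mk (p.coeff n)

theorem acnt_dvd (p : R[X]) (n : ℕ) : acnt p ∣ Associates.mk (p.coeff n) := by
  rcases le_or_gt n p.natDegree with h | h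
  · exact Finset.gcd_dvd (Finset.mem_range.mpr (Nat.lt_succ_of_le h))
  · rw [coeff_eq_zero_of_natDegree_lt h, Associates.mk_zero]; exact dvd_zero _

theorem dvd_acnt {d : Associates R} {p : R[X]}
    (h : ∀ n, d ∣ Associates.mk (p.coeff n)) : d ∣ acnt p :=
  Finset.dvd_gcd fun n _ => h n

theorem acnt_C (r : R) : acnt (C r) = Associates.mk r := by
  apply aeq
  · have := acnt_dvd (C r) 0
    rwa [coeff_C_zero] at this
  · apply dvd_acnt
    intro n
    rcases eq_or_ne n 0 with rfl | hn
    · rw [coeff_C_zero]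
    · rw [coeff_C, if_neg hn, Associates.mk_zero]; exact dvd_zero _

theorem acnt_zero : acnt (0 : R[X]) = 0 := by
  rw [← C_0, acnt_C, Associates.mk_zero]

theorem acnt_eq_zero {p : R[X]} : acnt p = 0 ↔ p = 0 := by
  constructor
  · intro h
    ext n
    have := acnt_dvd p n
    rw [h, zero_dvd_iff, Associates.mk_eq_zero] at this
    simp [this]
  · rintro rfl; exact acnt_zero

theorem acnt_C_mul (a : R) (p : R[X]) : acnt (C a * p) = Associates.mk a * acnt p := by
  rcases eq_or_ne a 0 with rfl | ha
  · simp [acnt_zero]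
  rcases eq_or_ne p 0 with rfl | hp
  · simp [acnt_zero]
  apply aeq
  · have hd : (Finset.range (p.natDegree + 1)).gcd (fun n => Associates.mk a * Associates.mk (p.coeff n))
        = Associates.mk a * acnt p := by
      rw [acnt]
      exact aeq (Finset.gcd_mul_left' _ _ _).dvd (Finset.gcd_mul_left' _ _ _).symm.dvd
    rw [← hd]
    apply Finset.dvd_gcd
    intro n _
    have := acnt_dvd (C a * p) n
    rwa [coeff_C_mul, ← Associates.mk_mul_mk] at this
  · apply dvd_acnt
    intro n
    rw [coeff_C_mul, ← Associates.mk_mul_mk]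
    exact mul_dvd_mul_left _ (acnt_dvd p n)


noncomputable def crep (p : R[X]) : R := (Associates.mk_surjective (acnt p)).choose

theorem mk_crep (p : R[X]) : Associates.mk (crep p) = acnt p :=
  (Associates.mk_surjective (acnt p)).choose_spec

theorem crep_ne_zero {p : R[X]} (hp : p ≠ 0) : crep p ≠ 0 := by
  intro h
  apply hp
  rw [← acnt_eq_zero, ← mk_crep, h, Associates.mk_zero]

theorem C_crep_dvd (p : R[X]) : C (crep p) ∣ p := by
  rw [C_dvd_iff_dvd_coeff]
  intro n
  rw [← Associates.mk_dvd_mk, mk_crep]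
  exact acnt_dvd p n

open scoped Classical in
noncomputable def app (p : R[X]) : R[X] :=
  if h : p = 0 then 1 else (C_crep_dvd p).choose

theorem app_split {p : R[X]} (hp : p ≠ 0) : p = C (crep p) * app p := by
  classical
  rw [app, dif_neg hp]
  exact (C_crep_dvd p).choose_spec

theorem app_ne_zero {p : R[X]} (hp : p ≠ 0) : app p ≠ 0 := by
  intro h
  apply hp
  rw [app_split hp, h, mul_zero]

theorem app_dvd (p : R[X]) : app p ∣ p := by
  rcases eq_or_ne p 0 with rfl | hp
  · exact dvd_zero _
  · exact Dvd.intro_left _ (app_split hp).symm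

theorem acnt_app {p : R[X]} (hp : p ≠ 0) : acnt (app p) = 1 := by
  have h2 : acnt p * 1 = acnt p * acnt (app p) := by
    conv_lhs => rw [mul_one]
    conv_lhs => rw [app_split hp]
    rw [acnt_C_mul, mk_crep]
  have h0 : acnt p ≠ 0 := fun h => hp (acnt_eq_zero.mp h)
  exact (mul_left_cancel₀ h0 h2).symm

theorem C_crep_ne_zero {p : R[X]} (hp : p ≠ 0) : C (crep p) ≠ 0 := by
  simpa using crep_ne_zero hp

theorem natDegree_app {p : R[X]} (hp : p ≠ 0) : (app p).natDegree = p.natDegree := by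
  conv_rhs => rw [app_split hp]
  rw [natDegree_mul (C_crep_ne_zero hp) (app_ne_zero hp), natDegree_C, zero_add]

theorem aprim_ne_zero {p : R[X]} (hp : acnt p = 1) : p ≠ 0 := by
  rintro rfl
  rw [acnt_zero] at hp
  exact zero_ne_one hp

theorem gcd_acnt_dvd {a : R} {p q : R[X]} (h : C a ∣ p - q) :
    gcd (Associates.mk a) (acnt p) ∣ gcd (Associates.mk a) (acnt q) := by
  obtain ⟨e, he⟩ := Associates.mk_surjective (gcd (Associates.mk a) (acnt p))
  obtain ⟨w, hw⟩ := h
  have hq : ∀ n, q.coeff n = p.coeff n - a * w.coeff n := by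
    intro n
    have : q = p - C a * w := by rw [← hw]; ring
    rw [this, coeff_sub, coeff_C_mul]
  have hea : e ∣ a := by
    rw [← Associates.mk_dvd_mk, he]; exact gcd_dvd_left _ _
  have hep : ∀ n, e ∣ p.coeff n := by
    intro n
    rw [← Associates.mk_dvd_mk, he]
    exact (gcd_dvd_right _ _).trans (acnt_dvd p n)
  rw [← he]
  refine dvd_gcd (by rw [Associates.mk_dvd_mk]; exact hea) (dvd_acnt fun n => ?_)
  rw [Associates.mk_dvd_mk, hq n]
  exact dvd_sub (hep n) (hea.mul_right _)

theorem gcd_acnt_sub {a : R} {p q : R[X]} (h : C a ∣ p - q) :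
    gcd (Associates.mk a) (acnt p) = gcd (Associates.mk a) (acnt q) :=
  aeq (gcd_acnt_dvd h) (gcd_acnt_dvd (by rwa [← dvd_neg, neg_sub] at h))

theorem acnt_eraseLead (p : R[X]) :
    acnt p = gcd (Associates.mk p.leadingCoeff) (acnt p.eraseLead) := by
  apply aeq
  · refine dvd_gcd ?_ (dvd_acnt fun n => ?_)
    · exact acnt_dvd p p.natDegree
    · rw [eraseLead_coeff]
      split
      · rw [Associates.mk_zero]; exact dvd_zero _
      · exact acnt_dvd p n
  · apply dvd_acnt
    intro n
    by_cases hn : n = p.natDegree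
    · subst hn; exact gcd_dvd_left _ _
    · have := (gcd_dvd_right (Associates.mk p.leadingCoeff) (acnt p.eraseLead)).trans
        (acnt_dvd p.eraseLead n)
      rwa [eraseLead_coeff, if_neg hn] at this

theorem acnt_mul_aux {p q : R[X]} :
    gcd (acnt (p * q).eraseLead) (Associates.mk p.leadingCoeff) =
      gcd (acnt (p.eraseLead * q)) (Associates.mk p.leadingCoeff) := by
  rw [gcd_comm (acnt _) _, gcd_comm (acnt (p.eraseLead * q)) _]
  apply gcd_acnt_sub
  rw [← self_sub_C_mul_X_pow, ← self_sub_C_mul_X_pow, sub_mul, sub_sub, add_comm, sub_add,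
    sub_sub_cancel, leadingCoeff_mul, RingHom.map_mul, mul_assoc, mul_assoc]
  exact dvd_sub (Dvd.intro _ rfl) (Dvd.intro _ rfl)



theorem acnt_mul (p q : R[X]) : acnt (p * q) = acnt p * acnt q := by
  classical
  suffices h : ∀ (n : ℕ) (p q : R[X]), (p * q).degree < n → acnt (p * q) = acnt p * acnt q by
    apply h ((p * q).natDegree + 1)
    exact lt_of_le_of_lt degree_le_natDegree (WithBot.coe_lt_coe.2 (Nat.lt_succ_self _))
  intro n
  induction n with
  | zero =>
    intro p q hpq
    rw [Nat.cast_zero, Nat.WithBot.lt_zero_iff, degree_eq_bot, mul_eq_zero] at hpq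
    rcases hpq with rfl | rfl <;> simp [acnt_zero]
  | succ n ih =>
    intro p q hpq
    by_cases p0 : p = 0
    · simp [p0, acnt_zero]
    by_cases q0 : q = 0
    · simp [q0, acnt_zero]
    rw [degree_eq_natDegree (mul_ne_zero p0 q0), Nat.cast_lt, Nat.lt_succ_iff_lt_or_eq,
      ← Nat.cast_lt (α := WithBot ℕ), ← degree_eq_natDegree (mul_ne_zero p0 q0),
      natDegree_mul p0 q0] at hpq
    rcases hpq with hlt | heq
    · exact ih p q hlt
    rw [← natDegree_app p0, ← natDegree_app q0, ← Nat.cast_inj (R := WithBot ℕ), Nat.cast_add,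
      ← degree_eq_natDegree (app_ne_zero p0), ← degree_eq_natDegree (app_ne_zero q0)] at heq
    have key : acnt (app q * app p) = 1 := by
      have h2 : acnt (app q * app p) ∣ 1 := by
        rw [acnt_eraseLead (app q * app p), leadingCoeff_mul, ← Associates.mk_mul_mk, gcd_comm]
        refine (gcd_mul_dvd_mul_gcd _ _ _).trans ?_
        have f1 : gcd (acnt ((app q * app p).eraseLead)) (Associates.mk (app q).leadingCoeff)
            = 1 := by
          rw [acnt_mul_aux, ih _ _ ?_, acnt_app p0, mul_one, gcd_comm, ← acnt_eraseLead,
            acnt_app q0]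
          · rw [degree_mul, ← heq, add_comm (app p).degree]
            exact (WithBot.add_lt_add_iff_right (by rw [Ne, degree_eq_bot]; exact app_ne_zero p0)).mpr
              (degree_eraseLead_lt (app_ne_zero q0))
        have f2 : gcd (acnt ((app q * app p).eraseLead)) (Associates.mk (app p).leadingCoeff)
            = 1 := by
          rw [mul_comm (app q), acnt_mul_aux, ih _ _ ?_, acnt_app q0, mul_one, gcd_comm,
            ← acnt_eraseLead, acnt_app p0]
          · rw [degree_mul, ← heq]
            exact (WithBot.add_lt_add_iff_right (by rw [Ne, degree_eq_bot]; exact app_ne_zero q0)).mpr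
              (degree_eraseLead_lt (app_ne_zero p0))
        rw [f1, f2, mul_one]
      rw [← Associates.isUnit_iff_eq_one]
      exact isUnit_of_dvd_one h2
    calc acnt (p * q) = acnt (C (crep p) * (C (crep q) * (app q * app p))) := by
          congr 1
          conv_lhs => rw [app_split p0, app_split q0]
          ring
      _ = acnt p * acnt q := by
          rw [acnt_C_mul, acnt_C_mul, key, mul_one, mk_crep, mk_crep]



theorem unit_mul_associated {w x : R[X]} (hw : IsUnit w) : Associated (w * x) x := by
  obtain ⟨v, rfl⟩ := hw
  exact ⟨v⁻¹, by rw [mul_comm (v : R[X]) x, mul_assoc, Units.mul_inv, mul_one]⟩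

theorem app_mul_assoc {p q : R[X]} (hp : p ≠ 0) (hq : q ≠ 0) :
    Associated (app (p * q)) (app p * app q) := by
  have hpq : p * q ≠ 0 := mul_ne_zero hp hq
  have e2 : Associated (crep (p * q)) (crep p * crep q) := by
    rw [← Associates.mk_eq_mk_iff_associated, mk_crep, ← Associates.mk_mul_mk, mk_crep, mk_crep,
      acnt_mul]
  obtain ⟨u, hu⟩ := e2
  have e1 : C (crep (p * q)) * app (p * q)
      = C (crep (p * q)) * ((C (u : R)) * (app p * app q)) := by
    rw [← app_split hpq]
    calc p * q = C (crep p) * app p * (C (crep q) * app q) := by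
          rw [← app_split hp, ← app_split hq]
      _ = C (crep p * crep q) * (app p * app q) := by rw [map_mul]; ring
      _ = C (crep (p * q) * (u : R)) * (app p * app q) := by rw [hu]
      _ = _ := by rw [map_mul]; ring
  have e3 := mul_left_cancel₀ (C_crep_ne_zero hpq) e1
  rw [e3]
  exact unit_mul_associated (u.isUnit.map C)

theorem assoc_app {p : R[X]} (hp : acnt p = 1) : Associated (app p) p := by
  have hp0 : p ≠ 0 := aprim_ne_zero hp
  have : IsUnit (crep p) := by rw [← Associates.mk_eq_one, mk_crep, hp]
  have h2 : Associated (C (crep p) * app p) (app p) := unit_mul_associated (this.map C)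
  rw [← app_split hp0] at h2
  exact h2.symm

theorem dvd_app_iff {p q : R[X]} (hp : acnt p = 1) (hq : q ≠ 0) : p ∣ app q ↔ p ∣ q := by
  constructor
  · exact fun h => h.trans (app_dvd q)
  · rintro ⟨r, rfl⟩
    have hp0 : p ≠ 0 := aprim_ne_zero hp
    have hr : r ≠ 0 := fun h => hq (by rw [h, mul_zero])
    refine (((assoc_app hp).symm.dvd).trans (dvd_mul_right (app p) (app r))).trans ?_
    exact (app_mul_assoc hp0 hr).symm.dvd

theorem isUnit_app_C (r : R) : IsUnit (app (C r)) := by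
  classical
  rcases eq_or_ne r 0 with rfl | h0
  · rw [map_zero, app, dif_pos rfl]; exact isUnit_one
  have hC : (C r : R[X]) ≠ 0 := by simpa using h0
  have : Associated (crep (C r)) r := by
    rw [← Associates.mk_eq_mk_iff_associated, mk_crep, acnt_C]
  obtain ⟨u, hu⟩ := this
  have e1 : C (crep (C r)) * app (C r) = C (crep (C r)) * C (u : R) := by
    rw [← app_split hC, ← map_mul, hu]
  rw [mul_left_cancel₀ (C_crep_ne_zero hC) e1]
  exact u.isUnit.map C

theorem exists_aprim_lcm {p q : R[X]} (hp : acnt p = 1) (hq : acnt q = 1) :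
    ∃ r : R[X], acnt r = 1 ∧ ∀ s : R[X], p ∣ s ∧ q ∣ s ↔ r ∣ s := by
  classical
  have h : ∃ (n : ℕ) (r : R[X]), r.natDegree = n ∧ acnt r = 1 ∧ p ∣ r ∧ q ∣ r :=
    ⟨(p * q).natDegree, p * q, rfl, by rw [acnt_mul, hp, hq, mul_one], dvd_mul_right _ _,
      dvd_mul_left _ _⟩
  rcases Nat.find_spec h with ⟨r, rdeg, rprim, pr, qr⟩
  refine ⟨r, rprim, fun s => ⟨?_, fun rs => ⟨pr.trans rs, qr.trans rs⟩⟩⟩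
  suffices hs : ∀ (n : ℕ) (s : R[X]), s.natDegree = n → p ∣ s ∧ q ∣ s → r ∣ s from
    hs s.natDegree s rfl
  clear s
  by_contra! con
  rcases Nat.find_spec con with ⟨s, sdeg, ⟨ps, qs⟩, rs⟩
  have s0 : s ≠ 0 := by
    contrapose! rs
    simp [rs]
  have hs :=
    Nat.find_min' h
      ⟨_, natDegree_app s0, acnt_app s0, (dvd_app_iff hp s0).2 ps, (dvd_app_iff hq s0).2 qs⟩
  rw [← rdeg] at hs
  by_cases sC : s.natDegree ≤ 0
  · have hr0 : r = C (r.coeff 0) := eq_C_of_natDegree_le_zero (le_trans hs sC)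
    have hu : IsUnit (r.coeff 0) := by
      rw [← Associates.mk_eq_one, ← acnt_C, ← hr0, rprim]
    have : IsUnit r := by rw [hr0]; exact hu.map C
    exact rs this.dvd
  have hcancel := natDegree_cancelLeads_lt_of_natDegree_le_natDegree hs (lt_of_not_ge sC)
  rw [sdeg] at hcancel
  apply Nat.find_min con hcancel
  refine ⟨_, rfl, ⟨dvd_cancelLeads_of_dvd_of_dvd pr ps, dvd_cancelLeads_of_dvd_of_dvd qr qs⟩,
    fun rcs => rs ?_⟩
  rw [← dvd_app_iff rprim s0]
  rw [cancelLeads, tsub_eq_zero_iff_le.mpr hs, pow_zero, mul_one] at rcs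
  have h :=
    dvd_add rcs (Dvd.intro_left (C (leadingCoeff s) * X ^ (natDegree s - natDegree r)) rfl)
  have hC0 : C r.leadingCoeff ≠ 0 := by
    rw [Ne, C_eq_zero, leadingCoeff_eq_zero]
    exact aprim_ne_zero rprim
  rw [sub_add_cancel] at h
  have h2 : r ∣ app (C r.leadingCoeff * s) := (dvd_app_iff rprim (mul_ne_zero hC0 s0)).2 h
  exact h2.trans ((app_mul_assoc hC0 s0).dvd.trans (unit_mul_associated (isUnit_app_C _)).dvd)


theorem dvd_iff_acnt {p q : R[X]} (hq : q ≠ 0) :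
    p ∣ q ↔ acnt p ∣ acnt q ∧ app p ∣ app q := by
  by_cases hp : p = 0
  · subst hp
    constructor
    · intro h; exact absurd (zero_dvd_iff.mp h) hq
    · rintro ⟨h1, -⟩
      rw [acnt_zero, zero_dvd_iff, acnt_eq_zero] at h1
      exact absurd h1 hq
  constructor
  · rintro ⟨r, rfl⟩
    have hr : r ≠ 0 := fun h => hq (by rw [h, mul_zero])
    refine ⟨by rw [acnt_mul]; exact dvd_mul_right _ _, ?_⟩
    exact (dvd_mul_right (app p) (app r)).trans (app_mul_assoc hp hr).symm.dvd
  · rintro ⟨h1, h2⟩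
    have hcc : crep p ∣ crep q := by
      rw [← Associates.mk_dvd_mk, mk_crep, mk_crep]; exact h1
    calc p = C (crep p) * app p := app_split hp
      _ ∣ C (crep q) * app q := mul_dvd_mul (_root_.map_dvd C hcc) h2
      _ = q := (app_split hq).symm

set_option maxHeartbeats 1000000 in
theorem pair_lcm (p q : R[X]) : ∃ c : R[X], ∀ s : R[X], p ∣ s ∧ q ∣ s ↔ c ∣ s := by
  by_cases hp : p = 0
  · subst hp
    exact ⟨0, fun s => ⟨fun h => h.1, fun h => ⟨h, (zero_dvd_iff.mp h) ▸ dvd_zero q⟩⟩⟩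
  by_cases hq : q = 0
  · subst hq
    exact ⟨0, fun s => ⟨fun h => h.2, fun h => ⟨(zero_dvd_iff.mp h) ▸ dvd_zero p, h⟩⟩⟩
  obtain ⟨r, rprim, hr⟩ := exists_aprim_lcm (acnt_app hp) (acnt_app hq)
  set l := lcm (crep p) (crep q) with hl
  have hl0 : l ≠ 0 := by
    rw [hl, Ne, lcm_eq_zero_iff]
    rintro (h | h)
    exacts [crep_ne_zero hp h, crep_ne_zero hq h]
  have hr0 : r ≠ 0 := aprim_ne_zero rprim
  have hc0 : C l * r ≠ 0 := mul_ne_zero (by simpa using hl0) hr0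
  refine ⟨C l * r, fun s => ?_⟩
  by_cases hs : s = 0
  · subst hs; simp
  rw [dvd_iff_acnt hs, dvd_iff_acnt hs, dvd_iff_acnt hs]
  have e1 : acnt (C l * r) = Associates.mk l := by
    rw [acnt_C_mul, rprim, mul_one]
  have eapp : Associated (app (C l * r)) r := by
    refine ((app_mul_assoc (p := C l) (by simpa using hl0) hr0).trans ?_)
    exact (unit_mul_associated (isUnit_app_C l)).trans (assoc_app rprim)
  have hacnt : acnt (C l * r) ∣ acnt s ↔ acnt p ∣ acnt s ∧ acnt q ∣ acnt s := by
    rw [e1, ← mk_crep s, ← mk_crep p, ← mk_crep q, Associates.mk_dvd_mk, Associates.mk_dvd_mk,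
      Associates.mk_dvd_mk, hl, lcm_dvd_iff]
  have happ : app (C l * r) ∣ app s ↔ app p ∣ app s ∧ app q ∣ app s := by
    rw [eapp.dvd_iff_dvd_left, ← hr (app s)]
  rw [hacnt, happ]
  tauto

end ContentPort

theorem gcds_of_gcdMonoid {M : Type} [CommMonoidWithZero M] [GCDMonoid M]
    (T : Finset M) (hT : T.Nonempty) :
    ∃ d : M, (∀ t ∈ T, d ∣ t) ∧ ∀ e : M, (∀ t ∈ T, e ∣ t) → e ∣ d := by
  classical
  induction T using Finset.induction_on with
  | empty => exact absurd hT (by simp)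
  | @insert a T' ha ih =>
    rcases T'.eq_empty_or_nonempty with rfl | hT'
    · refine ⟨a, fun t ht => ?_, fun e he => he a (Finset.mem_insert_self _ _)⟩
      rw [Finset.mem_insert] at ht
      rcases ht with rfl | ht
      · exact dvd_rfl
      · simp at ht
    · obtain ⟨d, hd1, hd2⟩ := ih hT'
      refine ⟨gcd a d, fun t ht => ?_, fun e he => ?_⟩
      · rw [Finset.mem_insert] at ht
        rcases ht with rfl | ht
        · exact gcd_dvd_left _ _
        · exact (gcd_dvd_right a d).trans (hd1 t ht)
      · exact dvd_gcd (he a (Finset.mem_insert_self _ _))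
          (hd2 e fun t ht => he t (Finset.mem_insert_of_mem ht))

theorem poly_gcds (R : Type) [CommRing R] [IsDomain R] [GCDMonoid R]
    (T : Finset (Polynomial R)) (hT : T.Nonempty) :
    ∃ d : Polynomial R, (∀ t ∈ T, d ∣ t) ∧ ∀ e : Polynomial R, (∀ t ∈ T, e ∣ t) → e ∣ d := by
  classical
  letI : GCDMonoid (Polynomial R) := gcdMonoidOfExistsLCM pair_lcm
  exact gcds_of_gcdMonoid T hT


theorem forward (S : Type) [inst : CommSemiring S] (hS : IsSemidomain S)
    (h : IsGCDS (Polynomial S)) : (∀ a : S, ∃ b : S, a + b = 0) ∧ IsGCDS S := by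
  classical
  obtain ⟨W⟩ := hS
  letI := W.commRing
  haveI := W.isDomain
  haveI : Nontrivial S := by
    refine ⟨1, 0, fun hh => ?_⟩
    have := congrArg W.f hh
    rw [map_one, map_zero] at this
    exact one_ne_zero this
  have mapinj : Function.Injective (Polynomial.map W.f) := Polynomial.map_injective W.f W.inj
  have mapne : ∀ {a : Polynomial S}, a ≠ 0 → Polynomial.map W.f a ≠ 0 := by
    intro a ha hc
    exact ha (mapinj (by rw [hc, Polynomial.map_zero]))
  -- a divisor of a polynomial whose image has natDegree 0 is constant
  have constOf : ∀ d : Polynomial S, (Polynomial.map W.f d).natDegree = 0 →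
      d = C (d.coeff 0) := by
    intro d hd
    apply Polynomial.ext
    intro n
    rcases Nat.eq_zero_or_pos n with rfl | hn
    · simp
    · rw [coeff_C, if_neg hn.ne']
      apply W.inj
      rw [map_zero, ← Polynomial.coeff_map]
      exact Polynomial.coeff_eq_zero_of_natDegree_lt (by omega)
  have mulne : ∀ {a b : Polynomial S}, a ≠ 0 → b ≠ 0 → a * b ≠ 0 := by
    intro a b ha hb hc
    have := congrArg (Polynomial.map W.f) hc
    rw [Polynomial.map_mul, Polynomial.map_zero] at this
    rcases mul_eq_zero.mp this with hh | hh
    exacts [mapne ha hh, mapne hb hh]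
  have pgcd : ∀ a b : Polynomial S, a ≠ 0 → b ≠ 0 →
      ∃ d, d ∣ a ∧ d ∣ b ∧ ∀ e, e ∣ a → e ∣ b → e ∣ d := by
    intro a b ha hb
    obtain ⟨d, hd1, hd2⟩ := h {a, b} ⟨a, by simp⟩ (by
      intro t ht
      rcases Finset.mem_insert.mp ht with rfl | ht
      · exact ha
      · rw [Finset.mem_singleton] at ht; subst ht; exact hb)
    exact ⟨d, hd1 a (by simp), hd1 b (by simp), fun e hea heb => hd2 e (by
      intro t ht
      rcases Finset.mem_insert.mp ht with rfl | ht
      · exact hea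
      · rw [Finset.mem_singleton] at ht; subst ht; exact heb)⟩
  constructor
  · -- additive inverses
    by_contra hcon
    push_neg at hcon
    obtain ⟨a, hane⟩ := hcon
    have hone : ∀ b : S, 1 + b ≠ 0 := by
      intro b hb
      apply hane (a * b)
      calc a + a * b = a * (1 + b) := by ring
        _ = 0 := by rw [hb, mul_zero]
    set p : Polynomial S := X + 1 with hp
    set f1 : Polynomial S := X ^ 3 + 1 with hf1
    set g1 : Polynomial S := X ^ 2 + X + 1 with hg1
    have hp0 : p ≠ 0 := by
      intro hh
      have := congrArg (fun q : Polynomial S => q.coeff 0) hh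
      simp [hp] at this
    have hf10 : f1 ≠ 0 := by
      intro hh
      have := congrArg (fun q : Polynomial S => q.coeff 0) hh
      simp [hf1, coeff_X_pow] at this
    have hg10 : g1 ≠ 0 := by
      intro hh
      have := congrArg (fun q : Polynomial S => q.coeff 0) hh
      simp [hg1, coeff_X_pow] at this
    have key : p * (X ^ 4 + X ^ 2 + 1) = f1 * g1 := by
      rw [hp, hf1, hg1]; ring
    have hmapp : Polynomial.map W.f p = X + 1 := by
      simp [hp]
    -- p does not divide g1
    have hpg : ¬p ∣ g1 := by
      rintro ⟨t, ht⟩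
      have h2 := congrArg (Polynomial.map W.f) ht
      rw [Polynomial.map_mul, hmapp] at h2
      have h3 := congrArg (Polynomial.eval (-1 : W.R)) h2
      simp [hg1] at h3
    -- p does not divide f1
    have hpf : ¬p ∣ f1 := by
      rintro ⟨t, ht⟩
      have h2 := congrArg (Polynomial.map W.f) ht
      rw [Polynomial.map_mul, hmapp] at h2
      have hXne : (X + 1 : Polynomial W.R) ≠ 0 := by
        intro hh
        have := congrArg (fun q : Polynomial W.R => q.coeff 0) hh
        simp at this
      have h4 : (X ^ 2 - X + 1 : Polynomial W.R) = Polynomial.map W.f t := by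
        apply mul_left_cancel₀ hXne
        rw [← h2, hf1, Polynomial.map_add, Polynomial.map_pow, Polynomial.map_X,
          Polynomial.map_one]
        ring
      have h5 : W.f (t.coeff 1) = -1 := by
        have := congrArg (fun q : Polynomial W.R => q.coeff 1) h4
        simp [Polynomial.coeff_map, coeff_X_pow, coeff_one] at this
        linear_combination -this
      apply hone (t.coeff 1)
      apply W.inj
      rw [map_add, map_one, h5, map_zero, add_neg_cancel]
    -- divisors of p are units or associates of p
    have hdiv : ∀ d : Polynomial S, d ∣ p → IsUnit d ∨ p ∣ d := by
      intro d hd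
      obtain ⟨e, he⟩ := hd
      have hd0 : d ≠ 0 := by rintro rfl; rw [zero_mul] at he; exact hp0 he
      have he0 : e ≠ 0 := by rintro rfl; rw [mul_zero] at he; exact hp0 he
      have hsum : (Polynomial.map W.f d).natDegree + (Polynomial.map W.f e).natDegree = 1 := by
        have h2 := congrArg (Polynomial.map W.f) he
        rw [Polynomial.map_mul, hmapp] at h2
        have h3 : ((X : Polynomial W.R) + 1).natDegree = 1 := by
          rw [← C_1]; exact natDegree_X_add_C 1
        rw [h2, natDegree_mul (mapne hd0) (mapne he0)] at h3
        exact h3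
      have hc1 : p.coeff 1 = 1 := by simp [hp, coeff_one]
      rcases Nat.eq_zero_or_pos (Polynomial.map W.f d).natDegree with hdeg | hdeg
      · left
        have hdC := constOf d hdeg
        rw [hdC] at he
        have h6 := congrArg (fun q : Polynomial S => q.coeff 1) he
        simp only [coeff_C_mul] at h6
        rw [hc1] at h6
        have hu : IsUnit (d.coeff 0) := IsUnit.of_mul_eq_one _ h6.symm
        rw [hdC]
        exact hu.map C
      · right
        have hedeg : (Polynomial.map W.f e).natDegree = 0 := by omega
        have heC := constOf e hedeg
        rw [heC] at he
        have h6 := congrArg (fun q : Polynomial S => q.coeff 1) he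
        simp only [coeff_mul_C] at h6
        rw [hc1] at h6
        have hu : IsUnit (e.coeff 0) := IsUnit.of_mul_eq_one _ (by
          rw [mul_comm] at h6; exact h6.symm)
        obtain ⟨v, hv⟩ := hu
        refine ⟨C ((v⁻¹ : Sˣ) : S), ?_⟩
        calc d = d * C (e.coeff 0) * C ((v⁻¹ : Sˣ) : S) := by
              rw [mul_assoc, ← map_mul, ← hv, Units.mul_inv, map_one, mul_one]
          _ = p * C ((v⁻¹ : Sˣ) : S) := by rw [he]
    -- the contradiction
    obtain ⟨d, hdp, hdf, hdmax⟩ := pgcd p f1 hp0 hf10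
    have hdu : IsUnit d := by
      rcases hdiv d hdp with hh | hh
      · exact hh
      · exact absurd (hh.trans hdf) hpf
    obtain ⟨D, hD1, hD2, hDmax⟩ :=
      pgcd (p * g1) (f1 * g1) (mulne hp0 hg10) (mulne hf10 hg10)
    have hpD : p ∣ D := hDmax p (dvd_mul_right _ _) ⟨(X ^ 4 + X ^ 2 + 1 : Polynomial S), key.symm⟩
    have hgD : g1 ∣ D := hDmax g1 (dvd_mul_left _ _) (dvd_mul_left _ _)
    obtain ⟨e, he⟩ := hgD
    have cancel : ∀ u v w : Polynomial S, u ≠ 0 → u * v = u * w → v = w := by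
      intro u v w hu huv
      apply mapinj
      apply mul_left_cancel₀ (mapne hu)
      rw [← Polynomial.map_mul, ← Polynomial.map_mul, huv]
    have hep : e ∣ p := by
      obtain ⟨k, hk⟩ := he ▸ hD1
      exact ⟨k, cancel g1 p (e * k) hg10 (by rw [← mul_assoc, mul_comm g1 p, hk])⟩
    have hef : e ∣ f1 := by
      obtain ⟨k, hk⟩ := he ▸ hD2
      exact ⟨k, cancel g1 f1 (e * k) hg10 (by rw [← mul_assoc, mul_comm g1 f1, hk])⟩
    have heu : IsUnit e := isUnit_of_dvd_unit (hdmax e hep hef) hdu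
    obtain ⟨v, hv⟩ := heu
    apply hpg
    obtain ⟨k, hk⟩ : p ∣ g1 * e := he ▸ hpD
    refine ⟨k * ((v⁻¹ : (Polynomial S)ˣ) : Polynomial S), ?_⟩
    calc g1 = g1 * e * ((v⁻¹ : (Polynomial S)ˣ) : Polynomial S) := by
          rw [← hv, mul_assoc, Units.mul_inv, mul_one]
      _ = p * (k * ((v⁻¹ : (Polynomial S)ˣ) : Polynomial S)) := by rw [hk, mul_assoc]
  · -- S is a GCD monoid
    intro T hT h0
    obtain ⟨s0, hs0⟩ := hT
    obtain ⟨d, hd1, hd2⟩ := h (T.image C) ⟨C s0, Finset.mem_image_of_mem C hs0⟩ (by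
      intro t ht
      obtain ⟨s, hs, rfl⟩ := Finset.mem_image.mp ht
      simpa using h0 s hs)
    have hs00 : (s0 : S) ≠ 0 := h0 s0 hs0
    have hdC : d = C (d.coeff 0) := by
      apply constOf
      obtain ⟨c, hc⟩ := hd1 (C s0) (Finset.mem_image_of_mem C hs0)
      have hd0 : d ≠ 0 := by
        rintro rfl
        rw [zero_mul] at hc
        exact hs00 (by simpa using hc)
      have hc0 : c ≠ 0 := by
        rintro rfl
        rw [mul_zero] at hc
        exact hs00 (by simpa using hc)
      have h2 := congrArg (Polynomial.map W.f) hc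
      rw [Polynomial.map_mul, Polynomial.map_C] at h2
      have h3 := congrArg Polynomial.natDegree h2
      rw [natDegree_C, natDegree_mul (mapne hd0) (mapne hc0)] at h3
      omega
    refine ⟨d.coeff 0, fun t ht => ?_, fun e he => ?_⟩
    · obtain ⟨c, hc⟩ := hd1 (C t) (Finset.mem_image_of_mem C ht)
      refine ⟨c.coeff 0, ?_⟩
      have := congrArg (fun q : Polynomial S => q.coeff 0) hc
      simpa [Polynomial.mul_coeff_zero] using this
    · have hCe : C e ∣ d := hd2 (C e) (by
        intro t ht
        obtain ⟨s, hs, rfl⟩ := Finset.mem_image.mp ht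
        exact map_dvd (C : S →+* Polynomial S) (he s hs))
      obtain ⟨c, hc⟩ := hCe
      refine ⟨c.coeff 0, ?_⟩
      have := congrArg (fun q : Polynomial S => q.coeff 0) hc
      simpa [Polynomial.mul_coeff_zero] using this

theorem backward (S : Type) [inst : CommSemiring S] (hS : IsSemidomain S)
    (h1 : ∀ a : S, ∃ b : S, a + b = 0) (h2 : IsGCDS S) : IsGCDS (Polynomial S) := by
  classical
  obtain ⟨W⟩ := hS
  letI := W.commRing
  haveI := W.isDomain
  letI : Neg S := ⟨fun a => (h1 a).choose⟩
  letI : CommRing S :=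
    { inst with
      neg := Neg.neg
      zsmul := zsmulRec
      neg_add_cancel := fun a => by rw [add_comm]; exact (h1 a).choose_spec }
  haveI : Nontrivial S := by
    refine ⟨1, 0, fun h => ?_⟩
    have := congrArg W.f h
    rw [map_one, map_zero] at this
    exact one_ne_zero this
  haveI : NoZeroDivisors S := by
    refine ⟨fun {a b} hab => ?_⟩
    have := congrArg W.f hab
    rw [map_mul, map_zero] at this
    rcases mul_eq_zero.mp this with h | h
    · exact Or.inl (W.inj (h.trans (map_zero W.f).symm))
    · exact Or.inr (W.inj (h.trans (map_zero W.f).symm))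
  haveI : IsDomain S := NoZeroDivisors.to_isDomain S
  have pairs : ∀ a b : S, a ≠ 0 → b ≠ 0 →
      ∃ d : S, d ∣ a ∧ d ∣ b ∧ ∀ e : S, e ∣ a → e ∣ b → e ∣ d := by
    intro a b ha hb
    obtain ⟨d, hd1, hd2⟩ := h2 {a, b} ⟨a, by simp⟩ (by
      intro t ht
      rcases Finset.mem_insert.mp ht with rfl | ht
      · exact ha
      · rw [Finset.mem_singleton] at ht; subst ht; exact hb)
    exact ⟨d, hd1 a (by simp), hd1 b (by simp), fun e hea heb => hd2 e (by
      intro t ht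
      rcases Finset.mem_insert.mp ht with rfl | ht
      · exact hea
      · rw [Finset.mem_singleton] at ht; subst ht; exact heb)⟩
  letI : GCDMonoid S := by
    refine gcdMonoidOfGCD
      (fun a b => if ha : a = 0 then b else if hb : b = 0 then a
        else (pairs a b ha hb).choose) ?_ ?_ ?_
    · intro a b
      by_cases ha : a = 0
      · simp [ha]
      by_cases hb : b = 0
      · simp [ha, hb]
      · simpa [ha, hb] using (pairs a b ha hb).choose_spec.1
    · intro a b
      by_cases ha : a = 0
      · simp [ha]
      by_cases hb : b = 0
      · simp [ha, hb]
      · simpa [ha, hb] using (pairs a b ha hb).choose_spec.2.1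
    · intro a b c hac hab
      by_cases hc : c = 0
      · simpa [hc] using hab
      by_cases hb : b = 0
      · simpa [hc, hb] using hac
      · simp only [hc, hb, dif_neg, not_false_iff]
        exact (pairs c b hc hb).choose_spec.2.2 a hac hab
  exact fun T hT h0 => poly_gcds S T hT


/-- For a semidomain `S`: the polynomial semidomain `S[x]` is a GCD-semidomain if and only if
`S` is a GCD-domain (in particular, `S` must be an integral domain, i.e. `(S,+)` is a group). -/
theorem stmt18 (S : Type) [CommSemiring S] (hS : IsSemidomain S) :
    IsGCDS (Polynomial S) ↔ ((∀ a : S, ∃ b : S, a + b = 0) ∧ IsGCDS S) := by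
  constructor
  · intro h
    exact forward S hS h
  · rintro ⟨h1, h2⟩
    exact backward S hS h1 h2
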